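/- arXiv:1311.6988 — 2 statements merged into one kernel-verified Lean document; each statement's English description precedes it below -/
import Mathlib

section
/- Weak König's Lemma implies the Fan Theorem (Ishihara's theorem, Theorem 2.2): assume that for every B' : List Bool → Bool, if for every m there exists a list s : List Bool of length m with B' (s.take k) = false for all k ≤ m, then there exists γ : ℕ → Bool with B' (γ↾n) = false for all n. Then for every B : List Bool → Bool, if every γ : ℕ → Bool has some n with B (γ↾n) = true, then there exists m such that every γ : ℕ → Bool has some n ≤ m with B (γ↾n) = true. -/
/-- The first `n` values of `γ` as a list. -/
def seg (γ : ℕ → Bool) (n : ℕ) : List Bool := List.ofFn fun i : Fin n => γ i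

lemma seg_length (γ : ℕ → Bool) (n : ℕ) : (seg γ n).length = n := by
  simp [seg]

lemma seg_take (γ : ℕ → Bool) (n k : ℕ) (h : k ≤ n) :
    (seg γ n).take k = seg γ k := by
  apply List.ext_getElem
  · simp [seg, h]
  · intro i h1 h2
    simp [seg]

/-- Weak König's Lemma implies the Fan Theorem (Ishihara's theorem, Theorem 2.2). -/
theorem wkl_implies_fan_theorem
    (hWKL : ∀ B' : List Bool → Bool,
      (∀ m : ℕ, ∃ s : List Bool, s.length = m ∧ ∀ k ≤ m, B' (s.take k) = false) →
      ∃ γ : ℕ → Bool, ∀ n, B' (seg γ n) = false) :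
    ∀ B : List Bool → Bool,
      (∀ γ : ℕ → Bool, ∃ n, B (seg γ n) = true) →
      ∃ m, ∀ γ : ℕ → Bool, ∃ n ≤ m, B (seg γ n) = true := by
  intro B hbar
  by_contra hm
  push_neg at hm
  set B' : List Bool → Bool := fun s => decide (∃ k ≤ s.length, B (s.take k) = true) with hB'
  have hpre : ∀ m : ℕ, ∃ s : List Bool, s.length = m ∧ ∀ k ≤ m, B' (s.take k) = false := by
    intro m
    obtain ⟨γ, hγ⟩ := hm m
    refine ⟨seg γ m, seg_length γ m, ?_⟩
    intro k hk
    rw [seg_take γ m k hk, hB']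
    simp only [decide_eq_false_iff_not, not_exists, not_and]
    intro j hj
    rw [seg_length] at hj
    rw [seg_take γ k j hj]
    exact (hγ j (hj.trans hk))
  obtain ⟨γ, hγ⟩ := hWKL B' hpre
  obtain ⟨n, hn⟩ := hbar γ
  have := hγ n
  rw [hB'] at this
  simp only [decide_eq_false_iff_not, not_exists, not_and] at this
  exact this n (by rw [seg_length]) (by rwa [seg_take γ n n le_rfl])
end

section
/- Principle of Open Induction on Cantor space (OI(C), derived in the paper from the Approximate-Fan Theorem in Theorem 12.3(ii); classically valid): let B : List Bool → Bool and let U := {γ : ℕ → Bool | ∃ n, B (γ↾n) = true}. Define γ ≺ δ iff there exists n with γ↾n = δ↾n, γ n = false and δ n = true. If U is progressive, i.e. for every γ : ℕ → Bool, ({δ | δ ≺ γ} ⊆ U) → γ ∈ U, then every γ : ℕ → Bool belongs to U. -/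
/-- `γ ≺ δ`: at the first place where they differ, `γ` is `false` and `δ` is `true`. -/
def Prec (γ δ : ℕ → Bool) : Prop :=
  ∃ n, seg γ n = seg δ n ∧ γ n = false ∧ δ n = true

lemma seg_succ (γ : ℕ → Bool) (n : ℕ) : seg γ (n+1) = seg γ n ++ [γ n] := by
  simp only [seg, List.ofFn_succ', Fin.coe_castSucc, Fin.val_last, List.concat_eq_append]

/-- Principle of Open Induction on Cantor space (OI(C), Theorem 12.3(ii);
classically valid): if the open set `U` determined by `B` is progressive with
respect to `≺`, then `U` is all of Cantor space. -/
theorem open_induction_cantor (B : List Bool → Bool)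
    (hprog : ∀ γ : ℕ → Bool,
      (∀ δ : ℕ → Bool, Prec δ γ → ∃ n, B (seg δ n) = true) →
      ∃ n, B (seg γ n) = true) :
    ∀ γ : ℕ → Bool, ∃ n, B (seg γ n) = true := by
  classical
  by_contra h
  push_neg at h
  obtain ⟨γ0, hγ0⟩ := h
  -- `Ext l` : some element of the complement of U extends `l`.
  set Ext : List Bool → Prop :=
    fun l => ∃ δ : ℕ → Bool, (∀ n, B (seg δ n) ≠ true) ∧ seg δ l.length = l with hExtdef
  -- greedy leftmost path in the complement
  set L : ℕ → List Bool :=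
    fun n => Nat.rec ([] : List Bool)
      (fun _ l => if Ext (l ++ [false]) then l ++ [false] else l ++ [true]) n with hLdef
  have hLsucc : ∀ n, L (n+1) =
      if Ext (L n ++ [false]) then L n ++ [false] else L n ++ [true] := fun n => rfl
  have hlen : ∀ n, (L n).length = n := by
    intro n
    induction n with
    | zero => rfl
    | succ n ih => rw [hLsucc]; split <;> simp [ih]
  have hExtL : ∀ n, Ext (L n) := by
    intro n
    induction n with
    | zero => exact ⟨γ0, hγ0, rfl⟩
    | succ n ih =>
      rw [hLsucc]
      split
      · next hE => exact hE
      · next hE =>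
        obtain ⟨δ, hδ, hsegδ⟩ := ih
        rw [hlen n] at hsegδ
        have hδn : δ n = true := by
          by_contra hb
          have hb' : δ n = false := by
            cases hδnv : δ n
            · rfl
            · exact absurd hδnv hb
          exact hE ⟨δ, hδ, by
            simp only [List.length_append, hlen n, List.length_singleton]
            rw [seg_succ, hsegδ, hb']⟩
        exact ⟨δ, hδ, by
          simp only [List.length_append, hlen n, List.length_singleton]
          rw [seg_succ, hsegδ, hδn]⟩
  -- the leftmost path as a sequence
  set γs : ℕ → Bool := fun n => (L (n+1)).getD n false with hγsdef
  have hbit : ∀ n (b : Bool), L (n+1) = L n ++ [b] → γs n = b := by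
    intro n b hb
    have : (L n ++ [b]).getD n false = b := by
      have h := List.getElem?_concat_length (l := L n) (a := b)
      rw [hlen n] at h
      rw [List.getD, h]
      rfl
    rw [hγsdef]; simpa [hb] using this
  have hLbit : ∀ n, L (n+1) = L n ++ [γs n] := by
    intro n
    rw [hLsucc]
    split
    · next hE => rw [hbit n false (by rw [hLsucc, if_pos hE])]
    · next hE => rw [hbit n true (by rw [hLsucc, if_neg hE])]
  have hseg : ∀ n, seg γs n = L n := by
    intro n
    induction n with
    | zero => rfl
    | succ n ih => rw [seg_succ, ih, hLbit]
  -- γs satisfies the progressiveness hypothesis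
  obtain ⟨m, hm⟩ := hprog γs (by
    rintro δ ⟨n, hsegeq, hδn, hγn⟩
    by_contra hδ
    push_neg at hδ
    -- γs n = true means no complement element extends L n ++ [false]
    have hnotExt : ¬ Ext (L n ++ [false]) := by
      intro hE
      have := hbit n false (by rw [hLsucc, if_pos hE])
      rw [hγn] at this
      simp at this
    exact hnotExt ⟨δ, hδ, by
      simp only [List.length_append, hlen n, List.length_singleton]
      rw [seg_succ, hsegeq, hseg, hδn]⟩)
  obtain ⟨δ', hδ', hsegδ'⟩ := hExtL m
  rw [hlen m] at hsegδ'
  rw [hseg m, ← hsegδ'] at hm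
  exact hδ' m hm
end
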